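/- (Strong convergence for the split equilibrium problem.) Let H₁, H₂ be real Hilbert spaces, C ⊆ H₁ and Q ⊆ H₂ nonempty closed convex sets, A : H₁ → H₂ a bounded linear operator with adjoint A*, g : Q × Q → ℝ satisfying Assumptions A, and f : C × C → ℝ satisfying Assumptions B with constants c₁, c₂ > 0. Let x¹ ∈ C₁ = C, let 0 < a ≤ b < min{1/(2c₁), 1/(2c₂)} and {λ_k} ⊆ [a, b], let μ > 0 with μ‖A‖² < 1, and let {α_k} ⊆ (0, ∞) with liminf_{k→∞} α_k > 0. Suppose the sequences {x^k}, {y^k}, {z^k}, {u^k}, {s^k} and sets {C_k} satisfy, for every k ≥ 1: y^k ∈ C minimizes y ↦ λ_k f(x^k, y) + (1/2)‖y − x^k‖² over C; z^k ∈ C minimizes y ↦ λ_k f(y^k, y) + (1/2)‖y − x^k‖² over C; u^k ∈ Q satisfies g(u^k, v) + (1/α_k)⟨v − u^k, u^k − A z^k⟩ ≥ 0 for all v ∈ Q; s^k = P_C(z^k + μ A*(u^k − A z^k)); C_{k+1} = {r ∈ C_k : ‖s^k − r‖ ≤ ‖z^k − r‖ ≤ ‖x^k − r‖}; and x^{k+1}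 = P_{C_{k+1}}(x¹). If Ω = {x* ∈ C : f(x*, y) ≥ 0 for all y ∈ C, A x* ∈ Q, and g(A x*, v) ≥ 0 for all v ∈ Q} is nonempty, then there exists p ∈ Ω such that {x^k} and {z^k} converge strongly to p and {u^k} converges strongly to A p ∈ Sol(Q, g). -/

import Mathlib

open Filter
set_option maxHeartbeats 1000000

lemma prox_opt {H : Type*} [NormedAddCommGroup H] [InnerProductSpace ℝ H]
    {C : Set H} (hC : Convex ℝ C) {φ : H → ℝ} (hφ : ConvexOn ℝ C φ)
    {lam : ℝ} (hlam : 0 < lam) {xk yk : H} (hyk : yk ∈ C)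
    (hmin : ∀ w ∈ C, lam * φ yk + (1/2) * ‖yk - xk‖^2 ≤ lam * φ w + (1/2) * ‖w - xk‖^2) :
    ∀ w ∈ C, (inner ℝ (xk - yk) (w - yk) : ℝ) ≤ lam * (φ w - φ yk) := by
  intro w hw
  set B : ℝ := ‖w - yk‖^2 with hB
  have hBnn : 0 ≤ B := sq_nonneg _
  -- show 0 ≤ A where A := lam * (φ w - φ yk) + ⟪yk - xk, w - yk⟫
  have key : ∀ ε > (0:ℝ), (inner ℝ (xk - yk) (w - yk) : ℝ) ≤ lam * (φ w - φ yk) + ε := by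
    intro ε hε
    set t : ℝ := min 1 (ε / (B + 1)) with ht
    have htpos : 0 < t := lt_min one_pos (div_pos hε (by linarith))
    have ht1 : t ≤ 1 := min_le_left _ _
    have hwt : t • w + (1 - t) • yk ∈ C := hC hw hyk (le_of_lt htpos) (by linarith) (by ring)
    have hconv : φ (t • w + (1 - t) • yk) ≤ t * φ w + (1 - t) * φ yk :=
      hφ.2 hw hyk (le_of_lt htpos) (by linarith) (by ring)
    have hm := hmin _ hwt
    have hexp : t • w + (1 - t) • yk - xk = (yk - xk) + t • (w - yk) := by
      module
    have hnrm : ‖t • w + (1 - t) • yk - xk‖^2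
        = ‖yk - xk‖^2 + 2 * (t * (inner ℝ (yk - xk) (w - yk) : ℝ)) + t^2 * B := by
      rw [hexp, norm_add_sq_real, real_inner_smul_right, norm_smul, mul_pow]
      simp [hB, abs_of_pos htpos]
    have h2 : 0 ≤ lam * (t * (φ w - φ yk)) + t * (inner ℝ (yk - xk) (w - yk) : ℝ) + t^2/2 * B := by
      have : lam * φ (t • w + (1 - t) • yk) ≤ lam * (t * φ w + (1 - t) * φ yk) :=
        mul_le_mul_of_nonneg_left hconv (le_of_lt hlam)
      nlinarith [hm, hnrm]
    have h3 : 0 ≤ lam * (φ w - φ yk) + (inner ℝ (yk - xk) (w - yk) : ℝ) + t/2 * B := by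
      have h2' : (0:ℝ) ≤ t * (lam * (φ w - φ yk) + (inner ℝ (yk - xk) (w - yk) : ℝ) + t/2 * B) := by
        nlinarith [h2]
      nlinarith [mul_pos htpos htpos, h2', htpos]
    have htB : t / 2 * B ≤ ε := by
      have h1 : t ≤ ε / (B + 1) := min_le_right _ _
      have : t * B ≤ ε / (B + 1) * B := mul_le_mul_of_nonneg_right h1 hBnn
      have h4 : ε / (B + 1) * B ≤ ε := by
        rw [div_mul_eq_mul_div, div_le_iff₀ (by linarith)]
        nlinarith
      linarith
    have hi : (inner ℝ (xk - yk) (w - yk) : ℝ) = -(inner ℝ (yk - xk) (w - yk) : ℝ) := by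
      rw [← inner_neg_left]; simp
    rw [hi]; linarith
  by_contra hcon
  push_neg at hcon
  have := key (((inner ℝ (xk - yk) (w - yk) : ℝ) - lam * (φ w - φ yk))/2) (by linarith)
  linarith


/-- Strong convergence theorem for the hybrid extragradient algorithm for the split
equilibrium problem (SEP), the special case `S = I`, `T = I`. Here `Cs k` plays the role of
`C_{k+1}` in the paper (so `Cs 0 = C₁ = C`), and `x 0 = x¹`. -/
theorem strong_convergence_SEP
    {H₁ : Type*} [NormedAddCommGroup H₁] [InnerProductSpace ℝ H₁] [CompleteSpace H₁]
    {H₂ : Type*} [NormedAddCommGroup H₂] [InnerProductSpace ℝ H₂] [CompleteSpace H₂]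
    (C : Set H₁) (hCne : C.Nonempty) (hCcl : IsClosed C) (hCcv : Convex ℝ C)
    (Q : Set H₂) (hQne : Q.Nonempty) (hQcl : IsClosed Q) (hQcv : Convex ℝ Q)
    (A : H₁ →L[ℝ] H₂)
    (g : H₂ → H₂ → ℝ)
    (hgA1 : ∀ u ∈ Q, g u u = 0)
    (hgA2 : ∀ u ∈ Q, ∀ v ∈ Q, g u v + g v u ≤ 0)
    (hgA3 : ∀ u ∈ Q, ∀ v ∈ Q, ∀ w ∈ Q,
      limsup (fun lam : ℝ => g (lam • w + (1 - lam) • u) v) (nhdsWithin 0 (Set.Ioi 0)) ≤ g u v)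
    (hgA4 : ∀ u ∈ Q, ConvexOn ℝ Q (g u) ∧ LowerSemicontinuousOn (g u) Q)
    (f : H₁ → H₁ → ℝ) (c₁ c₂ : ℝ) (hc₁ : 0 < c₁) (hc₂ : 0 < c₂)
    (hfB1 : ∀ x ∈ C, f x x = 0)
    (hfB2 : ∀ x ∈ C, ∀ y ∈ C, 0 ≤ f x y → f y x ≤ 0)
    (hfB3 : ∀ (xs ys : ℕ → H₁) (x y : H₁), (∀ k, xs k ∈ C) → (∀ k, ys k ∈ C) →
      x ∈ C → y ∈ C →
      (∀ w : H₁, Tendsto (fun k => (inner ℝ (xs k) w : ℝ)) atTop (nhds (inner ℝ x w))) →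
      (∀ w : H₁, Tendsto (fun k => (inner ℝ (ys k) w : ℝ)) atTop (nhds (inner ℝ y w))) →
      Tendsto (fun k => f (xs k) (ys k)) atTop (nhds (f x y)))
    (hfB4 : ∀ x ∈ C, ConvexOn ℝ C (f x))
    (hfB5 : ∀ x ∈ C, ∀ y ∈ C, ∀ z ∈ C,
      f x y + f y z ≥ f x z - c₁ * ‖x - y‖ ^ 2 - c₂ * ‖y - z‖ ^ 2)
    (a b : ℝ) (ha : 0 < a) (hab : a ≤ b) (hb : b < min (1 / (2 * c₁)) (1 / (2 * c₂)))
    (lam : ℕ → ℝ) (hlam : ∀ k, lam k ∈ Set.Icc a b)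
    (μ : ℝ) (hμ0 : 0 < μ) (hμ : μ * ‖A‖ ^ 2 < 1)
    (αk : ℕ → ℝ) (hαk : ∀ k, 0 < αk k)
    (hαkinf : ∃ c > 0, ∀ᶠ k in atTop, c ≤ αk k)
    (x y z : ℕ → H₁) (u : ℕ → H₂) (s : ℕ → H₁) (Cs : ℕ → Set H₁)
    (hCs0 : Cs 0 = C)
    (hx0 : x 0 ∈ C)
    (hy : ∀ k, y k ∈ C ∧ ∀ w ∈ C,
      lam k * f (x k) (y k) + (1 / 2) * ‖y k - x k‖ ^ 2 ≤
        lam k * f (x k) w + (1 / 2) * ‖w - x k‖ ^ 2)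
    (hz : ∀ k, z k ∈ C ∧ ∀ w ∈ C,
      lam k * f (y k) (z k) + (1 / 2) * ‖z k - x k‖ ^ 2 ≤
        lam k * f (y k) w + (1 / 2) * ‖w - x k‖ ^ 2)
    (hu : ∀ k, u k ∈ Q ∧ ∀ v ∈ Q,
      g (u k) v + (1 / αk k) * (inner ℝ (v - u k) (u k - A (z k)) : ℝ) ≥ 0)
    (hs : ∀ k, s k ∈ C ∧ ∀ w ∈ C,
      (inner ℝ ((z k + μ • (ContinuousLinearMap.adjoint A) (u k - A (z k))) - s k)
        (w - s k) : ℝ) ≤ 0)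
    (hCsrec : ∀ k, Cs (k + 1) =
      {r ∈ Cs k | ‖s k - r‖ ≤ ‖z k - r‖ ∧ ‖z k - r‖ ≤ ‖x k - r‖})
    (hxk : ∀ k, x (k + 1) ∈ Cs (k + 1) ∧ ∀ w ∈ Cs (k + 1),
      (inner ℝ (x 0 - x (k + 1)) (w - x (k + 1)) : ℝ) ≤ 0)
    (Ω : Set H₁)
    (hΩ : Ω = {xs : H₁ | xs ∈ C ∧ (∀ w ∈ C, f xs w ≥ 0) ∧
      A xs ∈ Q ∧ (∀ v ∈ Q, g (A xs) v ≥ 0)})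
    (hΩne : Ω.Nonempty) :
    ∃ p ∈ Ω,
      Tendsto x atTop (nhds p) ∧
      Tendsto z atTop (nhds p) ∧
      Tendsto u atTop (nhds (A p)) ∧
      A p ∈ Q ∧ (∀ v ∈ Q, g (A p) v ≥ 0) := by
  classical
  obtain ⟨p₀, hp₀⟩ := hΩne
  have hp₀' := hΩ ▸ hp₀
  obtain ⟨hp₀C, hp₀f, hp₀AQ, hp₀g⟩ := hp₀'
  -- basic bounds on b
  have hb₁ : 2 * b * c₁ < 1 := by
    have h1 : b < 1 / (2 * c₁) := lt_of_lt_of_le hb (min_le_left _ _)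
    rw [lt_div_iff₀ (by positivity)] at h1; linarith
  have hb₂ : 2 * b * c₂ < 1 := by
    have h1 : b < 1 / (2 * c₂) := lt_of_lt_of_le hb (min_le_right _ _)
    rw [lt_div_iff₀ (by positivity)] at h1; linarith
  have hlampos : ∀ k, 0 < lam k := fun k => lt_of_lt_of_le ha (hlam k).1
  -- Cs monotone and contained in C
  have hCsmono : ∀ k, Cs (k+1) ⊆ Cs k := by
    intro k; rw [hCsrec k]; exact fun r hr => hr.1
  have hCsAnti : ∀ {k m : ℕ}, k ≤ m → Cs m ⊆ Cs k := by
    intro k m h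
    induction h with
    | refl => exact subset_rfl
    | step h ih => exact fun r hr => (by exact ih (hCsmono _ hr))
  have hCsC : ∀ k, Cs k ⊆ C := fun k => hCs0 ▸ hCsAnti (Nat.zero_le k)
  -- x k is the projection of x 0 onto Cs k
  have hproj : ∀ k, x k ∈ Cs k ∧ ∀ w ∈ Cs k, (inner ℝ (x 0 - x k) (w - x k) : ℝ) ≤ 0 := by
    intro k
    cases k with
    | zero => exact ⟨hCs0 ▸ hx0, fun w _ => by simp⟩
    | succ n => exact hxk n
  have hxC : ∀ k, x k ∈ C := fun k => hCsC k (hproj k).1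
  have hyC : ∀ k, y k ∈ C := fun k => (hy k).1
  have hzC : ∀ k, z k ∈ C := fun k => (hz k).1
  have huQ : ∀ k, u k ∈ Q := fun k => (hu k).1
  -- optimality conditions for the prox steps
  have hyopt : ∀ k, ∀ w ∈ C, (inner ℝ (x k - y k) (w - y k) : ℝ)
      ≤ lam k * (f (x k) w - f (x k) (y k)) := fun k =>
    prox_opt hCcv (hfB4 (x k) (hxC k)) (hlampos k) (hyC k) (hy k).2
  have hzopt : ∀ k, ∀ w ∈ C, (inner ℝ (x k - z k) (w - z k) : ℝ)
      ≤ lam k * (f (y k) w - f (y k) (z k)) := fun k =>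
    prox_opt hCcv (hfB4 (y k) (hyC k)) (hlampos k) (hzC k) (hz k).2
  -- key inequality for z
  have keyz : ∀ p ∈ C, (∀ w ∈ C, 0 ≤ f p w) → ∀ k,
      ‖z k - p‖^2 ≤ ‖x k - p‖^2 - (1 - 2 * lam k * c₁) * ‖x k - y k‖^2
        - (1 - 2 * lam k * c₂) * ‖y k - z k‖^2 := by
    intro p hpC hpf k
    have h1 := hzopt k p hpC
    have hfyp : f (y k) p ≤ 0 := hfB2 p hpC (y k) (hyC k) (hpf _ (hyC k))
    have h2 := hyopt k (z k) (hzC k)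
    have h5 := hfB5 (x k) (hxC k) (y k) (hyC k) (z k) (hzC k)
    have e1 : ‖(x k - z k) - (p - z k)‖^2 = ‖x k - z k‖^2
        - 2 * (inner ℝ (x k - z k) (p - z k) : ℝ) + ‖p - z k‖^2 := norm_sub_sq_real _ _
    have e1' : (x k - z k) - (p - z k) = x k - p := by abel
    have e2 : ‖(x k - y k) - (z k - y k)‖^2 = ‖x k - y k‖^2
        - 2 * (inner ℝ (x k - y k) (z k - y k) : ℝ) + ‖z k - y k‖^2 := norm_sub_sq_real _ _
    have e2' : (x k - y k) - (z k - y k) = x k - z k := by abel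
    rw [e1'] at e1; rw [e2'] at e2
    have en1 : ‖z k - p‖ = ‖p - z k‖ := by rw [← norm_neg]; congr 1; abel
    have en2 : ‖y k - z k‖ = ‖z k - y k‖ := by rw [← norm_neg]; congr 1; abel
    rw [← en2] at e2
    have hl5 : lam k * f (x k) (z k) - lam k * f (x k) (y k) - lam k * c₁ * ‖x k - y k‖^2
        - lam k * c₂ * ‖y k - z k‖^2 ≤ lam k * f (y k) (z k) := by
      have := mul_le_mul_of_nonneg_left
        (by linarith [h5] : f (x k) (z k) - f (x k) (y k) - c₁ * ‖x k - y k‖^2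
          - c₂ * ‖y k - z k‖^2 ≤ f (y k) (z k)) (le_of_lt (hlampos k))
      nlinarith [this]
    have hlp : lam k * f (y k) p ≤ 0 :=
      mul_nonpos_of_nonneg_of_nonpos (le_of_lt (hlampos k)) hfyp
    rw [en1]
    have h1' := h1; rw [mul_sub] at h1'
    have h2' := h2; rw [mul_sub] at h2'
    linarith [h1', h2', hl5, hlp, e1, e2]
  -- key inequality for s
  have keys : ∀ p ∈ C, A p ∈ Q → (∀ v ∈ Q, 0 ≤ g (A p) v) → ∀ k,
      ‖s k - p‖^2 ≤ ‖z k - p‖^2 - μ * ‖u k - A (z k)‖^2 := by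
    intro p hpC hApQ hApg k
    set e := u k - A (z k) with he
    have hfirm : (inner ℝ (u k - A p) e : ℝ) ≤ 0 := by
      have h1 := (hu k).2 (A p) hApQ
      have h2 : g (u k) (A p) ≤ 0 := by
        have := hgA2 (u k) (huQ k) (A p) hApQ
        have := hApg (u k) (huQ k)
        linarith
      have h3 : 0 ≤ (inner ℝ (A p - u k) e : ℝ) := by
        have hα := hαk k
        by_contra hcontra
        push_neg at hcontra
        have : (1 / αk k) * (inner ℝ (A p - u k) e : ℝ) < 0 :=
          mul_neg_of_pos_of_neg (by positivity) hcontra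
        linarith [h1]
      have : (inner ℝ (A p - u k) e : ℝ) = -(inner ℝ (u k - A p) e : ℝ) := by
        rw [← inner_neg_left]; congr 1; abel
      linarith [h3, this.symm ▸ h3]
    set wv := z k + μ • (ContinuousLinearMap.adjoint A) e with hwv
    have hvar : (inner ℝ (wv - s k) (p - s k) : ℝ) ≤ 0 := (hs k).2 p hpC
    have h1 : ‖s k - p‖^2 ≤ ‖wv - p‖^2 := by
      have hexp : wv - p = (wv - s k) + (s k - p) := by abel
      have := norm_add_sq_real (wv - s k) (s k - p)
      rw [← hexp] at this
      have hip : 0 ≤ (inner ℝ (wv - s k) (s k - p) : ℝ) := by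
        have : (inner ℝ (wv - s k) (p - s k) : ℝ) = -(inner ℝ (wv - s k) (s k - p) : ℝ) := by
          rw [← inner_neg_right]; congr 1; abel
        linarith [hvar, this ▸ hvar]
      nlinarith [this, hip, sq_nonneg ‖wv - s k‖]
    have h2 : ‖wv - p‖^2 = ‖z k - p‖^2
        + 2 * (μ * (inner ℝ (A (z k) - A p) e : ℝ)) + μ^2 * ‖(ContinuousLinearMap.adjoint A) e‖^2 := by
      have hexp : wv - p = (z k - p) + μ • (ContinuousLinearMap.adjoint A) e := by
        rw [hwv]; abel
      have hbase : ‖wv - p‖^2 = ‖z k - p‖^2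
          + 2 * (inner ℝ (z k - p) (μ • (ContinuousLinearMap.adjoint A) e) : ℝ)
          + ‖μ • (ContinuousLinearMap.adjoint A) e‖^2 := by
        rw [hexp]; exact norm_add_sq_real _ _
      have ha1 : (inner ℝ (z k - p) (μ • (ContinuousLinearMap.adjoint A) e) : ℝ)
          = μ * (inner ℝ (A (z k) - A p) e : ℝ) := by
        rw [real_inner_smul_right, ContinuousLinearMap.adjoint_inner_right, map_sub]
      have ha2 : ‖μ • (ContinuousLinearMap.adjoint A) e‖^2
          = μ^2 * ‖(ContinuousLinearMap.adjoint A) e‖^2 := by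
        rw [norm_smul, mul_pow, Real.norm_eq_abs, sq_abs]
      linarith [hbase, ha1, ha2]
    have h3 : (inner ℝ (A (z k) - A p) e : ℝ) = (inner ℝ (u k - A p) e : ℝ) - ‖e‖^2 := by
      have : A (z k) - A p = (u k - A p) - e := by rw [he]; abel
      rw [this, inner_sub_left, real_inner_self_eq_norm_sq]
    have h4 : ‖(ContinuousLinearMap.adjoint A) e‖^2 ≤ ‖A‖^2 * ‖e‖^2 := by
      have hle : ‖(ContinuousLinearMap.adjoint A) e‖ ≤ ‖A‖ * ‖e‖ := by
        have := (ContinuousLinearMap.adjoint A).le_opNorm e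
        rwa [ContinuousLinearMap.adjoint.norm_map] at this
      have := pow_le_pow_left₀ (norm_nonneg _) hle 2
      rwa [mul_pow] at this
    have h5 : μ^2 * ‖A‖^2 * ‖e‖^2 ≤ μ * ‖e‖^2 := by
      have hmm : μ * (μ * ‖A‖^2) ≤ μ * 1 := mul_le_mul_of_nonneg_left (le_of_lt hμ) (le_of_lt hμ0)
      have h5b := mul_le_mul_of_nonneg_right hmm (sq_nonneg ‖e‖)
      calc μ^2 * ‖A‖^2 * ‖e‖^2 = (μ * (μ * ‖A‖^2)) * ‖e‖^2 := by ring
        _ ≤ (μ * 1) * ‖e‖^2 := h5b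
        _ = μ * ‖e‖^2 := by ring
    have h6 : μ * (inner ℝ (A (z k) - A p) e : ℝ) ≤ -(μ * ‖e‖^2) := by
      have hmfirm : μ * (inner ℝ (u k - A p) e : ℝ) ≤ 0 :=
        mul_nonpos_of_nonneg_of_nonpos (le_of_lt hμ0) hfirm
      rw [h3, mul_sub]; linarith
    have h7 := mul_le_mul_of_nonneg_left h4 (sq_nonneg μ)
    linarith [h1, h2, h5, h6, h7]
  -- Ω is contained in every Cs k
  have hΩsub : ∀ k, Ω ⊆ Cs k := by
    intro k
    induction k with
    | zero => rw [hCs0, hΩ]; exact fun r hr => hr.1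
    | succ n ih =>
      rw [hCsrec n]
      intro r hr
      have hr' := hΩ ▸ hr
      obtain ⟨hrC, hrf, hrAQ, hrg⟩ := hr'
      have hz2 : ‖z n - r‖ ≤ ‖x n - r‖ := by
        have hk := keyz r hrC (fun w hw => hrf w hw) n
        have hc1' : 0 ≤ (1 - 2 * lam n * c₁) := by nlinarith [(hlam n).2]
        have hc2' : 0 ≤ (1 - 2 * lam n * c₂) := by nlinarith [(hlam n).2]
        have hsq : ‖z n - r‖^2 ≤ ‖x n - r‖^2 := by
          nlinarith [mul_nonneg hc1' (sq_nonneg ‖x n - y n‖),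
            mul_nonneg hc2' (sq_nonneg ‖y n - z n‖)]
        exact (pow_le_pow_iff_left₀ (norm_nonneg _) (norm_nonneg _) two_ne_zero).mp hsq
      have hs2 : ‖s n - r‖ ≤ ‖z n - r‖ := by
        have hk := keys r hrC hrAQ (fun v hv => hrg v hv) n
        have hsq : ‖s n - r‖^2 ≤ ‖z n - r‖^2 := by
          nlinarith [mul_nonneg (le_of_lt hμ0) (sq_nonneg ‖u n - A (z n)‖)]
        exact (pow_le_pow_iff_left₀ (norm_nonneg _) (norm_nonneg _) two_ne_zero).mp hsq
      exact ⟨ih hr, hs2, hz2⟩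
  -- the projection distance inequalities
  have hps : ∀ k m : ℕ, k ≤ m → ‖x m - x k‖^2 ≤ ‖x m - x 0‖^2 - ‖x k - x 0‖^2 := by
    intro k m hkm
    have h := (hproj k).2 (x m) (hCsAnti hkm (hproj m).1)
    have e3 : ‖(x m - x 0) - (x k - x 0)‖^2 = ‖x m - x 0‖^2
        - 2 * (inner ℝ (x m - x 0) (x k - x 0) : ℝ) + ‖x k - x 0‖^2 := norm_sub_sq_real _ _
    have hexp2 : (x m - x 0) - (x k - x 0) = x m - x k := by abel
    rw [hexp2] at e3
    have h' : (inner ℝ (x 0 - x k) (x m - x k) : ℝ)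
        = -(inner ℝ (x k - x 0) (x m - x 0) : ℝ) + ‖x k - x 0‖^2 := by
      rw [show x 0 - x k = -(x k - x 0) by abel, inner_neg_left,
        show x m - x k = (x m - x 0) - (x k - x 0) by abel, inner_sub_right,
        real_inner_self_eq_norm_sq]
      ring
    rw [h'] at h
    have hsymm : (inner ℝ (x k - x 0) (x m - x 0) : ℝ) = inner ℝ (x m - x 0) (x k - x 0) :=
      real_inner_comm _ _
    rw [hsymm] at h
    linarith [e3, h]
  have hbd : ∀ k, ‖x k - x 0‖ ≤ ‖p₀ - x 0‖ := by
    intro k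
    have h := (hproj k).2 p₀ (hΩsub k hp₀)
    have h' : ‖x k - x 0‖^2 ≤ (inner ℝ (x k - x 0) (p₀ - x 0) : ℝ) := by
      have heq : (inner ℝ (x 0 - x k) (p₀ - x k) : ℝ)
          = -(inner ℝ (x k - x 0) (p₀ - x 0) : ℝ) + ‖x k - x 0‖^2 := by
        rw [show x 0 - x k = -(x k - x 0) by abel, inner_neg_left,
          show p₀ - x k = (p₀ - x 0) - (x k - x 0) by abel, inner_sub_right,
          real_inner_self_eq_norm_sq]
        ring
      rw [heq] at h
      linarith
    have h2 := real_inner_le_norm (x k - x 0) (p₀ - x 0)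
    by_cases h0 : ‖x k - x 0‖ = 0
    · rw [h0]; exact norm_nonneg _
    · have hpos : 0 < ‖x k - x 0‖ := lt_of_le_of_ne (norm_nonneg _) (Ne.symm h0)
      nlinarith [h', h2]
  -- the sequence of distances converges
  set t : ℕ → ℝ := fun k => ‖x k - x 0‖^2 with hT
  have htmono : Monotone t := by
    intro k m hkm
    have := hps k m hkm
    have h2 := sq_nonneg ‖x m - x k‖
    simp only [hT]
    linarith
  have htbdd : ∀ k, t k ≤ ‖p₀ - x 0‖^2 := fun k =>
    pow_le_pow_left₀ (norm_nonneg _) (hbd k) 2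
  obtain ⟨T, hTlim⟩ : ∃ L, Tendsto t atTop (nhds L) :=
    ⟨_, tendsto_atTop_ciSup htmono ⟨‖p₀ - x 0‖^2, by rintro _ ⟨n, rfl⟩; exact htbdd n⟩⟩
  have htC : CauchySeq t := hTlim.cauchySeq
  -- x is a Cauchy sequence
  have hxCauchy : CauchySeq x := by
    rw [Metric.cauchySeq_iff]
    intro ε hε
    obtain ⟨N, hN⟩ := Metric.cauchySeq_iff.mp htC (ε^2) (by positivity)
    have key2 : ∀ m n : ℕ, N ≤ m → N ≤ n → n ≤ m → ‖x m - x n‖ < ε := by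
      intro m n hm hn hnm
      have h1 := hps n m hnm
      have h2 := hN m hm n hn
      rw [Real.dist_eq] at h2
      have h3 : ‖x m - x n‖^2 < ε^2 := by
        have habs : t m - t n ≤ |t m - t n| := le_abs_self _
        calc ‖x m - x n‖^2 ≤ t m - t n := h1
          _ ≤ |t m - t n| := habs
          _ < ε^2 := h2
      exact lt_of_pow_lt_pow_left₀ 2 (le_of_lt hε) h3
    refine ⟨N, fun m hm n hn => ?_⟩
    rcases le_total n m with h | h
    · rw [dist_eq_norm]; exact key2 m n hm hn h
    · rw [dist_comm, dist_eq_norm]; exact key2 n m hn hm h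
  obtain ⟨p, hplim⟩ := cauchySeq_tendsto_of_complete hxCauchy
  have hpC : p ∈ C := hCcl.mem_of_tendsto hplim (Eventually.of_forall hxC)
  have hxshift : Tendsto (fun k => x (k+1)) atTop (nhds p) :=
    hplim.comp (tendsto_add_atTop_nat 1)
  have hxx : Tendsto (fun k => ‖x k - x (k+1)‖) atTop (nhds 0) := by
    have h1 := (hplim.sub hxshift).norm
    simpa using h1
  have hxs0 : Tendsto (fun k => ‖x (k+1) - p‖) atTop (nhds 0) :=
    tendsto_iff_norm_sub_tendsto_zero.mp hxshift
  have hCs1 : ∀ k, ‖s k - x (k+1)‖ ≤ ‖z k - x (k+1)‖ ∧ ‖z k - x (k+1)‖ ≤ ‖x k - x (k+1)‖ := by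
    intro k
    have h1 := (hxk k).1
    rw [hCsrec k] at h1
    exact h1.2
  have hzlim : Tendsto z atTop (nhds p) := by
    rw [tendsto_iff_norm_sub_tendsto_zero]
    apply squeeze_zero (g := fun k => ‖x k - x (k+1)‖ + ‖x (k+1) - p‖) (fun k => norm_nonneg _)
    · intro k
      calc ‖z k - p‖ ≤ ‖z k - x (k+1)‖ + ‖x (k+1) - p‖ := by
            rw [show z k - p = (z k - x (k+1)) + (x (k+1) - p) by abel]
            exact norm_add_le _ _
        _ ≤ ‖x k - x (k+1)‖ + ‖x (k+1) - p‖ := by linarith [(hCs1 k).2]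
    · simpa using hxx.add hxs0
  have hslim : Tendsto s atTop (nhds p) := by
    rw [tendsto_iff_norm_sub_tendsto_zero]
    apply squeeze_zero (g := fun k => ‖x k - x (k+1)‖ + ‖x (k+1) - p‖) (fun k => norm_nonneg _)
    · intro k
      calc ‖s k - p‖ ≤ ‖s k - x (k+1)‖ + ‖x (k+1) - p‖ := by
            rw [show s k - p = (s k - x (k+1)) + (x (k+1) - p) by abel]
            exact norm_add_le _ _
        _ ≤ ‖x k - x (k+1)‖ + ‖x (k+1) - p‖ := by linarith [(hCs1 k).1, (hCs1 k).2]
    · simpa using hxx.add hxs0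
  -- norm limits towards p₀
  have hnxp : Tendsto (fun k => ‖x k - p₀‖) atTop (nhds ‖p - p₀‖) := (hplim.sub_const p₀).norm
  have hnzp : Tendsto (fun k => ‖z k - p₀‖) atTop (nhds ‖p - p₀‖) := (hzlim.sub_const p₀).norm
  have hnsp : Tendsto (fun k => ‖s k - p₀‖) atTop (nhds ‖p - p₀‖) := (hslim.sub_const p₀).norm
  have hdiffxz : Tendsto (fun k => ‖x k - p₀‖^2 - ‖z k - p₀‖^2) atTop (nhds 0) := by
    have h1 := hnxp.pow 2
    have h2 := hnzp.pow 2
    simpa using h1.sub h2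
  have hdiffzs : Tendsto (fun k => ‖z k - p₀‖^2 - ‖s k - p₀‖^2) atTop (nhds 0) := by
    have h1 := hnzp.pow 2
    have h2 := hnsp.pow 2
    simpa using h1.sub h2
  -- ‖x k - y k‖ → 0
  have hb1' : (0:ℝ) < 1 - 2*b*c₁ := by linarith
  have hb2' : (0:ℝ) < 1 - 2*b*c₂ := by linarith
  have hxy : Tendsto (fun k => ‖x k - y k‖) atTop (nhds 0) := by
    have hxy2 : Tendsto (fun k => ‖x k - y k‖^2) atTop (nhds 0) := by
      apply squeeze_zero (g := fun k => (‖x k - p₀‖^2 - ‖z k - p₀‖^2) / (1 - 2*b*c₁))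
        (fun k => sq_nonneg _)
      · intro k
        rw [le_div_iff₀ hb1']
        have hk := keyz p₀ hp₀C (fun w hw => hp₀f w hw) k
        have hi1 : (1 - 2*b*c₁) * ‖x k - y k‖^2 ≤ (1 - 2*lam k*c₁) * ‖x k - y k‖^2 := by
          nlinarith [mul_nonneg (mul_nonneg (sub_nonneg.mpr (hlam k).2) (le_of_lt hc₁))
            (sq_nonneg ‖x k - y k‖)]
        have hi2 : (1 - 2*b*c₂) * ‖y k - z k‖^2 ≤ (1 - 2*lam k*c₂) * ‖y k - z k‖^2 := by
          nlinarith [mul_nonneg (mul_nonneg (sub_nonneg.mpr (hlam k).2) (le_of_lt hc₂))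
            (sq_nonneg ‖y k - z k‖)]
        have hi3 : 0 ≤ (1 - 2*b*c₂) * ‖y k - z k‖^2 :=
          mul_nonneg (le_of_lt hb2') (sq_nonneg _)
        nlinarith [hk, hi1, hi2, hi3]
      · simpa using hdiffxz.div_const (1 - 2*b*c₁)
    have hsqrt : Tendsto (fun k => Real.sqrt (‖x k - y k‖^2)) atTop (nhds (Real.sqrt 0)) :=
      (Real.continuous_sqrt.tendsto 0).comp hxy2
    rw [Real.sqrt_zero] at hsqrt
    have heq : ∀ k : ℕ, Real.sqrt (‖x k - y k‖^2) = ‖x k - y k‖ :=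
      fun k => Real.sqrt_sq (norm_nonneg _)
    simpa [heq] using hsqrt
  have hylim : Tendsto y atTop (nhds p) := by
    rw [tendsto_iff_norm_sub_tendsto_zero]
    apply squeeze_zero (g := fun k => ‖x k - y k‖ + ‖x k - p‖) (fun k => norm_nonneg _)
    · intro k
      calc ‖y k - p‖ = ‖-(x k - y k) + (x k - p)‖ := by rw [show y k - p = -(x k - y k) + (x k - p) by abel]
        _ ≤ ‖-(x k - y k)‖ + ‖x k - p‖ := norm_add_le _ _
        _ = ‖x k - y k‖ + ‖x k - p‖ := by rw [norm_neg]
    · simpa using hxy.add (tendsto_iff_norm_sub_tendsto_zero.mp hplim)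
  -- ‖u k - A (z k)‖ → 0
  have huAz : Tendsto (fun k => ‖u k - A (z k)‖) atTop (nhds 0) := by
    have huAz2 : Tendsto (fun k => ‖u k - A (z k)‖^2) atTop (nhds 0) := by
      apply squeeze_zero (g := fun k => (‖z k - p₀‖^2 - ‖s k - p₀‖^2) / μ)
        (fun k => sq_nonneg _)
      · intro k
        rw [le_div_iff₀ hμ0]
        have hk := keys p₀ hp₀C hp₀AQ (fun v hv => hp₀g v hv) k
        nlinarith [hk]
      · simpa using hdiffzs.div_const μ
    have hsqrt : Tendsto (fun k => Real.sqrt (‖u k - A (z k)‖^2)) atTop (nhds (Real.sqrt 0)) :=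
      (Real.continuous_sqrt.tendsto 0).comp huAz2
    rw [Real.sqrt_zero] at hsqrt
    have heq : ∀ k : ℕ, Real.sqrt (‖u k - A (z k)‖^2) = ‖u k - A (z k)‖ :=
      fun k => Real.sqrt_sq (norm_nonneg _)
    simpa [heq] using hsqrt
  have hAz : Tendsto (fun k => A (z k)) atTop (nhds (A p)) := (A.continuous.tendsto p).comp hzlim
  have hulim : Tendsto u atTop (nhds (A p)) := by
    have h1 : Tendsto (fun k => u k - A (z k)) atTop (nhds 0) :=
      tendsto_zero_iff_norm_tendsto_zero.mpr huAz
    have h2 := h1.add hAz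
    simpa using h2
  have hApQ2 : A p ∈ Q := hQcl.mem_of_tendsto hulim (Eventually.of_forall huQ)
  -- p solves the equilibrium problem for f
  have hinnerx : ∀ w : H₁, Tendsto (fun k => (inner ℝ (x k) w : ℝ)) atTop (nhds (inner ℝ p w)) :=
    fun w => hplim.inner tendsto_const_nhds
  have hinnery : ∀ w : H₁, Tendsto (fun k => (inner ℝ (y k) w : ℝ)) atTop (nhds (inner ℝ p w)) :=
    fun w => hylim.inner tendsto_const_nhds
  have hf1 : Tendsto (fun k => f (x k) (y k)) atTop (nhds 0) := by
    have h1 := hfB3 x y p p hxC hyC hpC hpC hinnerx hinnery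
    rwa [hfB1 p hpC] at h1
  have hpf : ∀ w ∈ C, 0 ≤ f p w := by
    intro w hw
    by_contra hneg
    push_neg at hneg
    have hf2 : Tendsto (fun k => f (x k) w) atTop (nhds (f p w)) :=
      hfB3 x (fun _ => w) p w hxC (fun _ => hw) hpC hw hinnerx (fun v => tendsto_const_nhds)
    have hR : Tendsto (fun k => (inner ℝ (x k - y k) (w - y k) : ℝ)) atTop (nhds 0) := by
      have h1 : Tendsto (fun k => x k - y k) atTop (nhds 0) :=
        tendsto_zero_iff_norm_tendsto_zero.mpr hxy
      have h2 : Tendsto (fun k => w - y k) atTop (nhds (w - p)) := tendsto_const_nhds.sub hylim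
      have h3 : Tendsto (fun k => (inner ℝ (x k - y k) (w - y k) : ℝ)) atTop
          (nhds (inner ℝ (0:H₁) (w - p) : ℝ)) := h1.inner h2
      simpa using h3
    have hlf : Tendsto (fun k => lam k * f (x k) (y k)) atTop (nhds 0) := by
      refine squeeze_zero_norm (a := fun k => b * |f (x k) (y k)|) (fun k => ?_) ?_
      · rw [Real.norm_eq_abs, abs_mul, abs_of_pos (hlampos k)]
        exact mul_le_mul_of_nonneg_right (hlam k).2 (abs_nonneg _)
      · have h1 := hf1.abs
        have h2 := h1.const_mul b
        simpa using h2
    set d := f p w with hd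
    have hev1 : ∀ᶠ k in atTop, f (x k) w < d/2 := hf2.eventually_lt_const (by linarith)
    have hev2 : ∀ᶠ k in atTop, a * d / 2 <
        (inner ℝ (x k - y k) (w - y k) : ℝ) + lam k * f (x k) (y k) := by
      have h1 := hR.add hlf
      rw [add_zero] at h1
      have had : a * d < 0 := mul_neg_of_pos_of_neg ha hneg
      exact h1.eventually_const_lt (by linarith)
    obtain ⟨k, hk1, hk2⟩ := (hev1.and hev2).exists
    have hopt := hyopt k w hw
    rw [mul_sub] at hopt
    have hfneg : f (x k) w < 0 := by linarith
    have hlf2 : lam k * f (x k) w ≤ a * f (x k) w := by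
      nlinarith [(hlam k).1, hfneg]
    have hlf3 : a * f (x k) w < a * (d/2) := by nlinarith [hfneg, ha, hk1]
    linarith [hopt, hk2, hlf2, hlf3]
  -- p solves the equilibrium problem for g at A p
  have hD : ∀ v ∈ Q, g v (A p) ≤ 0 := by
    intro v hv
    have hup : ∀ ε > (0:ℝ), ∀ᶠ k in atTop, g v (u k) ≤ ε := by
      intro ε hε
      obtain ⟨c, hc, hcev⟩ := hαkinf
      set M := ‖v - A p‖ + 1 with hM
      have hMpos : 0 < M := by positivity
      have hev1 : ∀ᶠ k in atTop, ‖v - u k‖ < M := by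
        have h1 : Tendsto (fun k => ‖v - u k‖) atTop (nhds ‖v - A p‖) :=
          (tendsto_const_nhds.sub hulim).norm
        exact h1.eventually_lt_const (by linarith)
      have hev2 : ∀ᶠ k in atTop, ‖u k - A (z k)‖ < ε * c / M :=
        huAz.eventually_lt_const (by positivity)
      filter_upwards [hev1, hev2, hcev] with k h1 h2 h3
      have hb1 : g v (u k) ≤ (1 / αk k) * (inner ℝ (v - u k) (u k - A (z k)) : ℝ) := by
        have hm1 := (hu k).2 v hv
        have hm2 := hgA2 (u k) (huQ k) v hv
        linarith
      have hb2 : (inner ℝ (v - u k) (u k - A (z k)) : ℝ) ≤ ε * c := by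
        have hi := real_inner_le_norm (v - u k) (u k - A (z k))
        have hprod : ‖v - u k‖ * ‖u k - A (z k)‖ ≤ M * (ε * c / M) :=
          mul_le_mul (le_of_lt h1) (le_of_lt h2) (norm_nonneg _) (le_of_lt hMpos)
        have hMc : M * (ε * c / M) = ε * c := by field_simp
        linarith
      have hb3 : (1 / αk k) * (inner ℝ (v - u k) (u k - A (z k)) : ℝ) ≤ ε := by
        rcases le_or_gt (inner ℝ (v - u k) (u k - A (z k)) : ℝ) 0 with hle | hlt
        · have hnp : (1 / αk k) * (inner ℝ (v - u k) (u k - A (z k)) : ℝ) ≤ 0 :=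
            mul_nonpos_of_nonneg_of_nonpos (one_div_nonneg.mpr (le_of_lt (hαk k))) hle
          linarith
        · have h1α : 1 / αk k ≤ 1 / c := one_div_le_one_div_of_le hc h3
          have hmul := mul_le_mul h1α hb2 (le_of_lt hlt) (by positivity)
          have hεc : (1/c) * (ε * c) = ε := by field_simp
          linarith
      linarith
    by_contra hcon
    push_neg at hcon
    have hlsc := (hgA4 v hv).2 (A p) hApQ2
    have hu2 : Tendsto u atTop (nhdsWithin (A p) Q) :=
      tendsto_nhdsWithin_of_tendsto_nhds_of_eventually_within u hulim (Eventually.of_forall huQ)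
    have hev := hu2.eventually (hlsc (g v (A p) / 2) (by linarith))
    obtain ⟨k, hk1, hk2⟩ := (hev.and (hup (g v (A p) / 4) (by linarith))).exists
    linarith
  have hpg : ∀ v ∈ Q, g (A p) v ≥ 0 := by
    intro v hv
    have hlimsup := hgA3 (A p) hApQ2 v hv v hv
    have hFpos : ∀ᶠ l in nhdsWithin (0:ℝ) (Set.Ioi 0),
        0 ≤ g (l • v + (1 - l) • (A p)) v := by
      filter_upwards [Ioc_mem_nhdsGT_of_mem (Set.mem_Ico.mpr ⟨le_refl (0:ℝ), zero_lt_one⟩)]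
        with l hl
      obtain ⟨hl0, hl1⟩ := hl
      have hwQ : l • v + (1 - l) • (A p) ∈ Q :=
        hQcv hv hApQ2 (le_of_lt hl0) (by linarith) (by ring)
      have hconv := (hgA4 _ hwQ).1.2 hv hApQ2 (le_of_lt hl0)
        (by linarith : (0:ℝ) ≤ 1 - l) (by ring)
      rw [hgA1 _ hwQ] at hconv
      rw [smul_eq_mul, smul_eq_mul] at hconv
      have hD2 : g (l • v + (1 - l) • (A p)) (A p) ≤ 0 := hD _ hwQ
      have hnp := mul_nonpos_of_nonneg_of_nonpos (by linarith : (0:ℝ) ≤ 1 - l) hD2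
      nlinarith [hconv, hnp, hl0]
    have h0 : (0:ℝ) ≤ limsup (fun l : ℝ => g (l • v + (1 - l) • (A p)) v)
        (nhdsWithin 0 (Set.Ioi 0)) := by
      rw [Filter.limsup_eq]
      apply Real.sInf_nonneg
      intro aa haa
      simp only [Set.mem_setOf_eq] at haa
      obtain ⟨l, h1, h2⟩ := (haa.and hFpos).exists
      linarith
    linarith
  refine ⟨p, ?_, hplim, hzlim, hulim, hApQ2, hpg⟩
  rw [hΩ]
  exact ⟨hpC, fun w hw => hpf w hw, hApQ2, hpg⟩
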